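/- For real matrices A and B, the Moore–Penrose pseudoinverse of their Kronecker product satisfies (A ⊗ B)† = A† ⊗ B†. -/
import Mathlib

open Matrix
open scoped Kronecker

/-- `Y` is the Moore–Penrose pseudoinverse of `X`. -/
def IsMoorePenrose {α β : Type*} [Fintype α] [Fintype β]
    (X : Matrix α β ℝ) (Y : Matrix β α ℝ) : Prop :=
  X * Y * X = X ∧ Y * X * Y = Y ∧ (X * Y)ᵀ = X * Y ∧ (Y * X)ᵀ = Y * X

theorem stmt_5 (m1 n1 m2 n2 : ℕ)
    (A : Matrix (Fin m1) (Fin n1) ℝ) (B : Matrix (Fin m2) (Fin n2) ℝ)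
    (Ad : Matrix (Fin n1) (Fin m1) ℝ) (Bd : Matrix (Fin n2) (Fin m2) ℝ)
    (hA : IsMoorePenrose A Ad) (hB : IsMoorePenrose B Bd) :
    IsMoorePenrose (A ⊗ₖ B) (Ad ⊗ₖ Bd) := by
  obtain ⟨hA1, hA2, hA3, hA4⟩ := hA
  obtain ⟨hB1, hB2, hB3, hB4⟩ := hB
  refine ⟨?_, ?_, ?_, ?_⟩ <;>
    simp only [← Matrix.mul_kronecker_mul, hA1, hA2, hB1, hB2] <;>
    rw [← Matrix.kroneckerMap_transpose] <;> simp only [hA3, hA4, hB3, hB4]
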